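/- Let R be a commutative unital semiring that is weakly divisible, i.e., there exist s, t ∈ R with 1 = 2·s + 3·t. Let M be a positively ordered monoid that is a module over R such that scalar multiplication is order-preserving in the module variable: a ≤ b implies r•a ≤ r•b for all r ∈ R. Then M is nearly unperforated. -/

import Mathlib

/-- Let `R` be a weakly divisible commutative unital semiring
(there are `s t ∈ R` with `1 = 2•s + 3•t`), and let `M` be a positively
ordered monoid that is a module over `R` with order-preserving scalar
multiplication.  Then `M` is nearly unperforated. -/
theorem stmt9 {R : Type*} [CommSemiring R] {M : Type*} [AddCommMonoid M] [PartialOrder M] [IsOrderedAddMonoid M]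
    [Module R M] (h0 : ∀ z : M, 0 ≤ z)
    (hwd : ∃ s t : R, (1 : R) = 2 • s + 3 • t)
    (hsmul_mono : ∀ (r : R) (a b : M), a ≤ b → r • a ≤ r • b) :
    ∀ a b : M, (∃ k₀ : ℕ, ∀ k : ℕ, k₀ ≤ k → k • a ≤ k • b) → a ≤ b := by
  rintro a b ⟨k₀, hk⟩
  obtain ⟨s, t, hst⟩ := hwd
  set n := k₀ with hn
  have hkn : k₀ ≤ 2 ^ n := (Nat.lt_two_pow_self (n := k₀)).le
  have key : ∀ (r : R) (m : ℕ), k₀ ≤ m → (m • r) • a ≤ (m • r) • b := by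
    intro r m hm
    rw [smul_assoc, smul_assoc, smul_comm m r a, smul_comm m r b]
    exact hsmul_mono r _ _ (hk m hm)
  have h1 : (1 : R) = ∑ i ∈ Finset.range (n + 1),
      ((2 • s) ^ i * (3 • t) ^ (n - i) * (n.choose i : R)) := by
    calc (1 : R) = (2 • s + 3 • t) ^ n := by rw [← hst, one_pow]
    _ = _ := add_pow _ _ _
  have hterm : ∀ i ∈ Finset.range (n + 1),
      ((2 • s) ^ i * (3 • t) ^ (n - i) * (n.choose i : R)) • a ≤
      ((2 • s) ^ i * (3 • t) ^ (n - i) * (n.choose i : R)) • b := by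
    intro i hi
    have hi' : i ≤ n := Nat.lt_succ_iff.mp (Finset.mem_range.mp hi)
    have heq : (2 • s) ^ i * (3 • t) ^ (n - i) * (n.choose i : R) =
        ((2 ^ i * 3 ^ (n - i) * n.choose i : ℕ)) • (s ^ i * t ^ (n - i)) := by
      rw [smul_pow, smul_pow, smul_mul_assoc, mul_smul_comm, mul_comm,
        ← nsmul_eq_mul, smul_smul, smul_smul]
      congr 1
      ring
    have hbig : k₀ ≤ 2 ^ i * 3 ^ (n - i) * n.choose i := by
      calc k₀ ≤ 2 ^ n := hkn
      _ = 2 ^ i * 2 ^ (n - i) := by rw [← pow_add, Nat.add_sub_cancel' hi']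
      _ ≤ 2 ^ i * 3 ^ (n - i) := by
          exact Nat.mul_le_mul_left _ (Nat.pow_le_pow_left (by norm_num) _)
      _ ≤ 2 ^ i * 3 ^ (n - i) * n.choose i :=
          Nat.le_mul_of_pos_right _ (Nat.choose_pos hi')
    rw [heq]
    exact key _ _ hbig
  calc a = (1 : R) • a := (one_smul R a).symm
  _ = ∑ i ∈ Finset.range (n + 1),
      ((2 • s) ^ i * (3 • t) ^ (n - i) * (n.choose i : R)) • a := by
        rw [h1, Finset.sum_smul]
  _ ≤ ∑ i ∈ Finset.range (n + 1),
      ((2 • s) ^ i * (3 • t) ^ (n - i) * (n.choose i : R)) • b :=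
        Finset.sum_le_sum hterm
  _ = (1 : R) • b := by rw [h1, Finset.sum_smul]
  _ = b := one_smul R b
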